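/- For every nonnegative integer n and every complex number z, ∑_{k=0}^{⌊n/2⌋} 4^{n-2k} · C(n,2k) · B_{n-2k}(z) = ∑_{j=0}^{n} (-1)^{n-j} · 2^j · C(n,j) · B_j(2z) = 2^n · B_n(2z - 1/2), where C(n,k) denotes the binomial coefficient. -/

import Mathlib

open Finset

/-- The Bernoulli polynomial `B_n` evaluated at a complex number `z`,
with generating function `t·e^{zt}/(e^t−1) = ∑_{n≥0} B_n(z)·t^n/n!`. -/
noncomputable def bernoulliPoly (n : ℕ) (z : ℂ) : ℂ :=
  Polynomial.aeval z (Polynomial.bernoulli n)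

/-- The Euler polynomial `E_n` evaluated at a complex number `z`,
with generating function `2·e^{zt}/(e^t+1) = ∑_{n≥0} E_n(z)·t^n/n!`,
given by the explicit formula `E_n(z) = ∑_{k=0}^n 2^{-k} ∑_{j=0}^k (-1)^j C(k,j)(z+j)^n`. -/
noncomputable def eulerPoly (n : ℕ) (z : ℂ) : ℂ :=
  ∑ k ∈ range (n + 1), (1 / 2 ^ k : ℂ) *
    ∑ j ∈ range (k + 1), (-1) ^ j * (k.choose j : ℂ) * (z + j) ^ n

open PowerSeries Nat

noncomputable def G (t : ℂ) : ℂ⟦X⟧ :=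
  PowerSeries.mk fun n => Polynomial.aeval t ((1 / n ! : ℚ) • Polynomial.bernoulli n)

lemma coeff_G (n : ℕ) (t : ℂ) :
    PowerSeries.coeff (R := ℂ) n (G t) = (n ! : ℂ)⁻¹ * bernoulliPoly n t := by
  simp [G, bernoulliPoly, Rat.smul_def, map_smul]

lemma G_mul (t : ℂ) : G t * (exp ℂ - 1) = PowerSeries.X * rescale t (exp ℂ) := by
  unfold G
  exact Polynomial.bernoulli_generating_function t

lemma exp_sub_one_ne : (exp ℂ - 1 : ℂ⟦X⟧) ≠ 0 := by
  intro h
  have := congrArg (PowerSeries.coeff (R := ℂ) 1) h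
  simp [coeff_exp] at this

lemma G_add (x y : ℂ) : G (x + y) = G x * rescale y (exp ℂ) := by
  refine mul_right_cancel₀ exp_sub_one_ne ?_
  rw [G_mul, ← exp_mul_exp_eq_exp_add, mul_comm (G x), mul_assoc, G_mul]
  ring

lemma G_half (x : ℂ) :
    G x + G (x + 2⁻¹) = PowerSeries.C (R := ℂ) 2 * rescale 2⁻¹ (G (2 * x)) := by
  have hsq : rescale (2⁻¹ : ℂ) (exp ℂ) * rescale (2⁻¹ : ℂ) (exp ℂ) = exp ℂ := by
    rw [exp_mul_exp_eq_exp_add]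
    norm_num
  have hfac : (exp ℂ - 1 : ℂ⟦X⟧)
      = (rescale (2⁻¹ : ℂ) (exp ℂ) - 1) * (rescale (2⁻¹ : ℂ) (exp ℂ) + 1) := by
    linear_combination -hsq
  have h1 : rescale (2⁻¹ : ℂ) (G (2 * x)) * (rescale (2⁻¹ : ℂ) (exp ℂ) - 1)
      = PowerSeries.C (R := ℂ) 2⁻¹ * (PowerSeries.X * rescale x (exp ℂ)) := by
    rw [show (rescale (2⁻¹ : ℂ) (exp ℂ) - 1 : ℂ⟦X⟧) = rescale (2⁻¹:ℂ) (exp ℂ - 1) by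
      simp [map_sub]]
    rw [← map_mul, G_mul, map_mul, rescale_X, rescale_rescale,
      show (2 * x * 2⁻¹ : ℂ) = x by ring]
    ring
  have h2 : (PowerSeries.C (R := ℂ) 2) * (PowerSeries.C (R := ℂ) 2⁻¹) = 1 := by
    rw [← map_mul]; norm_num
  refine mul_right_cancel₀ exp_sub_one_ne ?_
  calc (G x + G (x + 2⁻¹)) * (exp ℂ - 1)
      = G x * (exp ℂ - 1) + G (x + 2⁻¹) * (exp ℂ - 1) := by ring
    _ = PowerSeries.X * rescale x (exp ℂ) * (rescale (2⁻¹:ℂ) (exp ℂ) + 1) := by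
        rw [G_mul, G_mul, ← exp_mul_exp_eq_exp_add]; ring
    _ = PowerSeries.C (R := ℂ) 2 * (PowerSeries.C (R := ℂ) 2⁻¹ * (PowerSeries.X * rescale x (exp ℂ)))
          * (rescale (2⁻¹:ℂ) (exp ℂ) + 1) := by
        rw [show (PowerSeries.C (R := ℂ) 2 : ℂ⟦X⟧) * (PowerSeries.C (R := ℂ) 2⁻¹ * (PowerSeries.X * rescale x (exp ℂ))) * (rescale (2⁻¹:ℂ) (exp ℂ) + 1) = (PowerSeries.C (R := ℂ) 2 * PowerSeries.C (R := ℂ) 2⁻¹) * (PowerSeries.X * rescale x (exp ℂ) * (rescale (2⁻¹:ℂ) (exp ℂ) + 1)) from by ring, h2, one_mul]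
    _ = PowerSeries.C (R := ℂ) 2 * (rescale (2⁻¹ : ℂ) (G (2 * x)) * (rescale (2⁻¹ : ℂ) (exp ℂ) - 1))
          * (rescale (2⁻¹:ℂ) (exp ℂ) + 1) := by rw [h1]
    _ = PowerSeries.C (R := ℂ) 2 * rescale 2⁻¹ (G (2 * x)) * (exp ℂ - 1) := by rw [hfac]; ring

lemma bernoulliPoly_add (n : ℕ) (x y : ℂ) :
    bernoulliPoly n (x + y)
      = ∑ j ∈ range (n + 1), (n.choose j : ℂ) * bernoulliPoly j x * y ^ (n - j) := by
  have hn : ((n)! : ℂ) ≠ 0 := Nat.cast_ne_zero.2 (factorial_ne_zero n)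
  have h := congrArg (PowerSeries.coeff (R := ℂ) n) (G_add x y)
  rw [PowerSeries.coeff_mul, Nat.sum_antidiagonal_eq_sum_range_succ_mk, coeff_G] at h
  simp only [coeff_G, coeff_rescale, coeff_exp] at h
  calc bernoulliPoly n (x + y)
      = (n ! : ℂ) * ((n ! : ℂ)⁻¹ * bernoulliPoly n (x + y)) := by field_simp
    _ = (n ! : ℂ) * ∑ j ∈ range (n + 1),
          (j ! : ℂ)⁻¹ * bernoulliPoly j x * (y ^ (n - j) * algebraMap ℚ ℂ (1 / (n - j)!)) := by
        rw [h]
    _ = ∑ j ∈ range (n + 1), (n.choose j : ℂ) * bernoulliPoly j x * y ^ (n - j) := by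
        rw [mul_sum]
        refine sum_congr rfl fun j hj => ?_
        have hj' : j ≤ n := mem_range_succ_iff.mp hj
        rw [Nat.cast_choose ℂ hj']
        have h1 : ((j)! : ℂ) ≠ 0 := Nat.cast_ne_zero.2 (factorial_ne_zero j)
        have h2 : (((n - j))! : ℂ) ≠ 0 := Nat.cast_ne_zero.2 (factorial_ne_zero (n - j))
        push_cast
        field_simp

lemma bernoulliPoly_half (n : ℕ) (x : ℂ) :
    bernoulliPoly n x + bernoulliPoly n (x + 2⁻¹)
      = 2 * (2⁻¹ : ℂ) ^ n * bernoulliPoly n (2 * x) := by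
  have hn : ((n)! : ℂ) ≠ 0 := Nat.cast_ne_zero.2 (factorial_ne_zero n)
  have h := congrArg (PowerSeries.coeff (R := ℂ) n) (G_half x)
  rw [map_add, coeff_G, coeff_G, PowerSeries.coeff_C_mul, coeff_rescale, coeff_G] at h
  refine mul_left_cancel₀ (inv_ne_zero hn) ?_
  calc (n ! : ℂ)⁻¹ * (bernoulliPoly n x + bernoulliPoly n (x + 2⁻¹))
      = (n ! : ℂ)⁻¹ * bernoulliPoly n x + (n ! : ℂ)⁻¹ * bernoulliPoly n (x + 2⁻¹) := by ring
    _ = 2 * ((2⁻¹ : ℂ) ^ n * ((n ! : ℂ)⁻¹ * bernoulliPoly n (2 * x))) := h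
    _ = (n ! : ℂ)⁻¹ * (2 * (2⁻¹ : ℂ) ^ n * bernoulliPoly n (2 * x)) := by ring

lemma sum_parity (n : ℕ) (g : ℕ → ℂ) :
    ∑ j ∈ range (n + 1), (1 + (-1 : ℂ) ^ (n - j)) * g j
      = 2 * ∑ k ∈ range (n / 2 + 1), g (n - 2 * k) := by
  rw [← sum_filter_add_sum_filter_not (range (n + 1)) (fun j => Even (n - j))]
  have hodd : ∑ j ∈ (range (n + 1)).filter (fun j => ¬Even (n - j)),
      (1 + (-1 : ℂ) ^ (n - j)) * g j = 0 := by
    refine sum_eq_zero fun j hj => ?_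
    have : Odd (n - j) := Nat.not_even_iff_odd.mp (mem_filter.mp hj).2
    rw [this.neg_one_pow]
    ring
  rw [hodd, add_zero, mul_sum]
  refine sum_nbij' (fun j => (n - j) / 2) (fun k => n - 2 * k) ?_ ?_ ?_ ?_ ?_
  · intro j hj
    have := (mem_filter.mp hj).1
    rw [mem_range_succ_iff] at this ⊢
    exact Nat.div_le_div_right (Nat.sub_le n j)
  · intro k hk
    rw [mem_range_succ_iff] at hk
    have h2k : 2 * k ≤ n := by omega
    refine mem_filter.mpr ⟨mem_range_succ_iff.mpr (Nat.sub_le n _), ?_⟩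
    rw [Nat.sub_sub_self h2k]
    exact even_two_mul k
  · intro j hj
    obtain ⟨hj1, hj2⟩ := mem_filter.mp hj
    rw [mem_range_succ_iff] at hj1
    obtain ⟨m, hm⟩ := hj2
    show n - 2 * ((n - j) / 2) = j
    omega
  · intro k hk
    rw [mem_range_succ_iff] at hk
    show (n - (n - 2 * k)) / 2 = k
    omega
  · intro j hj
    obtain ⟨hj1, hj2⟩ := mem_filter.mp hj
    rw [mem_range_succ_iff] at hj1
    rw [hj2.neg_one_pow]
    have : n - 2 * ((n - j) / 2) = j := by
      obtain ⟨m, hm⟩ := hj2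
      omega
    rw [this]
    ring

theorem stmt0 (n : ℕ) (z : ℂ) :
    (∑ k ∈ range (n / 2 + 1), (4 : ℂ) ^ (n - 2 * k) * (n.choose (2 * k) : ℂ) *
        bernoulliPoly (n - 2 * k) z
      = ∑ j ∈ range (n + 1), (-1 : ℂ) ^ (n - j) * 2 ^ j * (n.choose j : ℂ) *
        bernoulliPoly j (2 * z)) ∧
    (∑ j ∈ range (n + 1), (-1 : ℂ) ^ (n - j) * 2 ^ j * (n.choose j : ℂ) *
        bernoulliPoly j (2 * z)
      = 2 ^ n * bernoulliPoly n (2 * z - 1 / 2)) := by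
  have h2 : ∑ j ∈ range (n + 1), (-1 : ℂ) ^ (n - j) * 2 ^ j * (n.choose j : ℂ) *
        bernoulliPoly j (2 * z) = 2 ^ n * bernoulliPoly n (2 * z - 1 / 2) := by
    have hadd := bernoulliPoly_add n (2 * z) (-(2⁻¹))
    rw [show (2 * z + -(2⁻¹) : ℂ) = 2 * z - 1 / 2 by ring] at hadd
    rw [hadd, mul_sum]
    refine sum_congr rfl fun j hj => ?_
    have hj' : j ≤ n := mem_range_succ_iff.mp hj
    have hsplit : (2 : ℂ) ^ n = 2 ^ j * 2 ^ (n - j) := by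
      rw [← pow_add, Nat.add_sub_cancel' hj']
    have key : ((-(2⁻¹) : ℂ)) ^ (n - j) * 2 ^ (n - j) = (-1 : ℂ) ^ (n - j) := by
      rw [← mul_pow]; norm_num
    rw [hsplit]
    linear_combination (-(2 : ℂ) ^ j * (n.choose j : ℂ) *
      bernoulliPoly j (2 * z)) * key
  refine ⟨?_, h2⟩
  rw [h2]
  -- now prove LHS₁ = 2^n * B_n(2z - 1/2)
  set g : ℕ → ℂ := fun j => (4 : ℂ) ^ j * (n.choose j : ℂ) * bernoulliPoly j z with hg
  have hL : ∑ k ∈ range (n / 2 + 1), (4 : ℂ) ^ (n - 2 * k) * (n.choose (2 * k) : ℂ) *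
        bernoulliPoly (n - 2 * k) z = ∑ k ∈ range (n / 2 + 1), g (n - 2 * k) := by
    refine sum_congr rfl fun k hk => ?_
    have hk' : k ≤ n / 2 := mem_range_succ_iff.mp hk
    have h2k : 2 * k ≤ n := by omega
    rw [hg]
    simp only
    rw [show n.choose (n - 2 * k) = n.choose (2 * k) from Nat.choose_symm h2k]
  have hplus : (4 : ℂ) ^ n * bernoulliPoly n (z + 4⁻¹) = ∑ j ∈ range (n + 1), g j := by
    rw [bernoulliPoly_add, mul_sum]
    refine sum_congr rfl fun j hj => ?_
    have hj' : j ≤ n := mem_range_succ_iff.mp hj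
    have hsplit : (4 : ℂ) ^ n = 4 ^ j * 4 ^ (n - j) := by
      rw [← pow_add, Nat.add_sub_cancel' hj']
    have key : ((4⁻¹ : ℂ)) ^ (n - j) * 4 ^ (n - j) = 1 := by
      rw [← mul_pow]; norm_num
    rw [hg]; simp only
    rw [hsplit]
    linear_combination ((4 : ℂ) ^ j * (n.choose j : ℂ) * bernoulliPoly j z) * key
  have hminus : (4 : ℂ) ^ n * bernoulliPoly n (z + -(4⁻¹))
      = ∑ j ∈ range (n + 1), (-1 : ℂ) ^ (n - j) * g j := by
    rw [bernoulliPoly_add, mul_sum]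
    refine sum_congr rfl fun j hj => ?_
    have hj' : j ≤ n := mem_range_succ_iff.mp hj
    have hsplit : (4 : ℂ) ^ n = 4 ^ j * 4 ^ (n - j) := by
      rw [← pow_add, Nat.add_sub_cancel' hj']
    have key : ((-(4⁻¹) : ℂ)) ^ (n - j) * 4 ^ (n - j) = (-1 : ℂ) ^ (n - j) := by
      rw [← mul_pow]; norm_num
    rw [hg]; simp only
    rw [hsplit]
    linear_combination ((4 : ℂ) ^ j * (n.choose j : ℂ) * bernoulliPoly j z) * key
  have hhalf := bernoulliPoly_half n (z + -(4⁻¹))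
  rw [show (z + -(4⁻¹) + 2⁻¹ : ℂ) = z + 4⁻¹ by ring,
    show (2 * (z + -(4⁻¹)) : ℂ) = 2 * z - 1 / 2 by ring] at hhalf
  have hpow : (4 : ℂ) ^ n * (2⁻¹ : ℂ) ^ n = 2 ^ n := by
    rw [← mul_pow]; norm_num
  refine mul_left_cancel₀ (two_ne_zero' ℂ) ?_
  calc (2 : ℂ) * ∑ k ∈ range (n / 2 + 1), (4 : ℂ) ^ (n - 2 * k) * (n.choose (2 * k) : ℂ) *
        bernoulliPoly (n - 2 * k) z
      = 2 * ∑ k ∈ range (n / 2 + 1), g (n - 2 * k) := by rw [hL]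
    _ = ∑ j ∈ range (n + 1), (1 + (-1 : ℂ) ^ (n - j)) * g j := (sum_parity n g).symm
    _ = (∑ j ∈ range (n + 1), g j) + ∑ j ∈ range (n + 1), (-1 : ℂ) ^ (n - j) * g j := by
        rw [← sum_add_distrib]
        exact sum_congr rfl fun j _ => by ring
    _ = (4 : ℂ) ^ n * (bernoulliPoly n (z + -(4⁻¹)) + bernoulliPoly n (z + 4⁻¹)) := by
        rw [← hplus, ← hminus]; ring
    _ = (4 : ℂ) ^ n * (2 * (2⁻¹ : ℂ) ^ n * bernoulliPoly n (2 * z - 1 / 2)) := by rw [hhalf]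
    _ = 2 * (2 ^ n * bernoulliPoly n (2 * z - 1 / 2)) := by
        linear_combination (2 * bernoulliPoly n (2 * z - 1 / 2)) * hpow
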